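/- arXiv:2503.07696 — 4 statements merged into one kernel-verified Lean document; each statement's English description precedes it below -/
import Mathlib

section
/- Let p be a monic polynomial of degree n ≥ 2 over ℂ with n distinct roots, all lying on the unit circle. If μ is a root of p, then the real part of μ · p''(μ)/p'(μ) equals n - 1. -/
open Polynomial

lemma prod_eval_ne_zero (s : Multiset ℂ) (μ : ℂ) (h : ∀ ν ∈ s, ν ≠ μ) :
    ((s.map (fun ν => X - C ν)).prod).eval μ ≠ 0 := by
  rw [eval_multiset_prod]
  refine Multiset.prod_ne_zero ?_
  simp only [Multiset.mem_map]
  rintro ⟨q, ⟨ν, hν, rfl⟩, hq⟩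
  simp only [eval_sub, eval_X, eval_C] at hq
  exact h ν hν (by linear_combination -hq)

lemma deriv_eval_eq (s : Multiset ℂ) (μ : ℂ) (h : ∀ ν ∈ s, ν ≠ μ) :
    (derivative ((s.map (fun ν => X - C ν)).prod)).eval μ =
      (s.map (fun ν => 1 / (μ - ν))).sum * ((s.map (fun ν => X - C ν)).prod).eval μ := by
  induction s using Multiset.induction with
  | empty => simp
  | cons a s ih =>
    have ha : a ≠ μ := h a (Multiset.mem_cons_self a s)
    have hs : ∀ ν ∈ s, ν ≠ μ := fun ν hν => h ν (Multiset.mem_cons_of_mem hν)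
    have hQ := prod_eval_ne_zero s μ hs
    have hd : μ - a ≠ 0 := sub_ne_zero.mpr (Ne.symm ha)
    simp only [Multiset.map_cons, Multiset.prod_cons, Multiset.sum_cons, derivative_mul,
      derivative_sub, derivative_X, derivative_C, sub_zero, eval_add, eval_mul, eval_sub,
      eval_X, eval_C, eval_one, one_mul, ih hs]
    field_simp

lemma term_re (μ ν : ℂ) (hμ : ‖μ‖ = 1) (hν : ‖ν‖ = 1) (hne : ν ≠ μ) :
    (2 * μ / (μ - ν)).re = 1 := by
  have hd : μ - ν ≠ 0 := sub_ne_zero.mpr (Ne.symm hne)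
  have hμ0 : μ ≠ 0 := by intro h; simp [h] at hμ
  have hν0 : ν ≠ 0 := by intro h; simp [h] at hν
  have hcμ : (starRingEnd ℂ) μ = μ⁻¹ := by
    have : μ * (starRingEnd ℂ) μ = 1 := by
      rw [Complex.mul_conj]; norm_cast
      rw [Complex.normSq_eq_norm_sq, hμ]; norm_num
    field_simp at this ⊢
    linear_combination this
  have hcν : (starRingEnd ℂ) ν = ν⁻¹ := by
    have : ν * (starRingEnd ℂ) ν = 1 := by
      rw [Complex.mul_conj]; norm_cast
      rw [Complex.normSq_eq_norm_sq, hν]; norm_num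
    field_simp at this ⊢
    linear_combination this
  have key : (2 * μ / (μ - ν)) + (starRingEnd ℂ) (2 * μ / (μ - ν)) = 2 := by
    rw [map_div₀, map_mul, map_ofNat, hcμ, map_sub, hcμ, hcν]
    have h2 : μ⁻¹ - ν⁻¹ ≠ 0 := by
      rw [sub_ne_zero]
      intro h
      exact hd (sub_eq_zero.mpr (by rw [← inv_inv μ, h, inv_inv]))
    have h3 : μ * ν - μ ^ 2 ≠ 0 := by
      intro h
      exact hd (by apply mul_left_cancel₀ hμ0; linear_combination -h)
    field_simp
    ring
  have h4 : ((2 * (2 * μ / (μ - ν)).re : ℝ) : ℂ) = 2 := by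
    rw [← Complex.add_conj, key]
  have h5 : (2 : ℝ) * (2 * μ / (μ - ν)).re = 2 := by exact_mod_cast h4
  linarith

theorem stmt_4 (n : ℕ) (hn : 2 ≤ n) (p : Polynomial ℂ) (hmonic : p.Monic)
    (hdeg : p.natDegree = n) (hsimple : p.roots.Nodup)
    (hcircle : ∀ μ ∈ p.roots, ‖μ‖ = 1)
    (μ : ℂ) (hμ : p.eval μ = 0) :
    (μ * (Polynomial.derivative (Polynomial.derivative p)).eval μ /
      (Polynomial.derivative p).eval μ).re = n - 1 := by
  have hp0 : p ≠ 0 := hmonic.ne_zero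
  have hmem : μ ∈ p.roots := by
    rw [mem_roots hp0]; exact hμ
  set s : Multiset ℂ := p.roots.erase μ with hs_def
  have hroots : p.roots = μ ::ₘ s := (Multiset.cons_erase hmem).symm
  have hμs : μ ∉ s := by
    have := hsimple
    rw [hroots, Multiset.nodup_cons] at this
    exact this.1
  have hsub : ∀ ν ∈ s, ν ∈ p.roots := fun ν hν => Multiset.mem_of_mem_erase hν
  have hne : ∀ ν ∈ s, ν ≠ μ := fun ν hν h => hμs (h ▸ hν)
  have hcard : p.roots.card = n := by
    rw [← hdeg]
    exact (splits_iff_card_roots.mp (IsAlgClosed.splits p))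
  have hscard : s.card = n - 1 := by
    have : p.roots.card = s.card + 1 := by rw [hroots, Multiset.card_cons]
    omega
  have hfact : p = (X - C μ) * (s.map (fun ν => X - C ν)).prod := by
    conv_lhs => rw [(IsAlgClosed.splits p).eq_prod_roots_of_monic hmonic]
    rw [hroots, Multiset.map_cons, Multiset.prod_cons]
  set Q : Polynomial ℂ := (s.map (fun ν => X - C ν)).prod with hQ_def
  have hQne : Q.eval μ ≠ 0 := prod_eval_ne_zero s μ hne
  have hd1 : (derivative p).eval μ = Q.eval μ := by
    rw [hfact]
    simp [derivative_mul]
  have hd2 : (derivative (derivative p)).eval μ = 2 * (derivative Q).eval μ := by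
    rw [hfact]
    simp only [derivative_mul, derivative_sub, derivative_X, derivative_C, sub_zero, one_mul]
    simp only [derivative_add, derivative_mul, derivative_sub, derivative_X, derivative_C,
      sub_zero, one_mul, eval_add, eval_mul, eval_sub, eval_X, eval_C, sub_self, zero_mul,
      add_zero, mul_zero]
    ring
  set S : ℂ := (s.map (fun ν => 1 / (μ - ν))).sum with hS_def
  have hQd : (derivative Q).eval μ = S * Q.eval μ := deriv_eval_eq s μ hne
  have hexpr : μ * (derivative (derivative p)).eval μ / (derivative p).eval μ =
      (s.map (fun ν => 2 * μ / (μ - ν))).sum := by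
    rw [hd1, hd2, hQd]
    rw [show μ * (2 * (S * Q.eval μ)) / Q.eval μ = 2 * μ * S by
      field_simp]
    rw [hS_def, ← Multiset.sum_map_mul_left]
    apply congrArg
    apply Multiset.map_congr rfl
    intro ν _
    rw [mul_one_div]
  rw [hexpr]
  have : ((s.map (fun ν => 2 * μ / (μ - ν))).sum).re =
      ((s.map (fun ν => (2 * μ / (μ - ν)).re)).sum) := by
    have h := map_multiset_sum Complex.reAddGroupHom ((s.map (fun ν => 2 * μ / (μ - ν))))
    rw [Multiset.map_map] at h
    exact h
  rw [this]
  have hμ1 : ‖μ‖ = 1 := hcircle μ hmem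
  have hsum : (s.map (fun ν => (2 * μ / (μ - ν)).re)).sum = s.card • (1 : ℝ) := by
    rw [← Multiset.sum_replicate, ← Multiset.map_const']
    congr 1
    apply Multiset.map_congr rfl
    intro ν hν
    exact term_re μ ν hμ1 (hcircle ν (hsub ν hν)) (hne ν hν)
  rw [hsum, hscard]
  simp [nsmul_eq_mul, Nat.cast_sub (show 1 ≤ n by omega)]
end

section
/- Let p be a polynomial of degree n ≥ 1 over ℂ whose roots μ_1, …, μ_n (with multiplicity) all lie in the closed unit disk. Then for every z on the unit circle with p(z) ≠ 0, the real part of z·p'(z)/p(z) is at least n/2. -/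
open Polynomial

lemma aux_logderiv (z : ℂ) (s : Multiset ℂ) (h : ∀ μ ∈ s, z - μ ≠ 0) :
    z * (Polynomial.derivative (s.map (fun μ => X - C μ)).prod).eval z /
      ((s.map (fun μ => X - C μ)).prod).eval z = (s.map (fun μ => z / (z - μ))).sum := by
  induction s using Multiset.induction with
  | empty => simp
  | cons a s ih =>
    have ha : z - a ≠ 0 := h a (Multiset.mem_cons_self a s)
    have hs : ∀ μ ∈ s, z - μ ≠ 0 := fun μ hμ => h μ (Multiset.mem_cons_of_mem hμ)
    have hP : ((s.map (fun μ => X - C μ)).prod).eval z ≠ 0 := by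
      rw [eval_multiset_prod]
      refine Multiset.prod_ne_zero ?_
      simp only [Multiset.map_map, Function.comp_apply, eval_sub, eval_X, eval_C]
      intro h0
      obtain ⟨μ, hμ, hμ0⟩ := Multiset.mem_map.mp h0
      exact hs μ hμ hμ0
    rw [Multiset.map_cons, Multiset.prod_cons, Multiset.map_cons, Multiset.sum_cons,
      derivative_mul, ← ih hs]
    simp only [eval_add, eval_mul, derivative_sub, derivative_X, derivative_C, sub_zero,
      eval_one, eval_sub, eval_X, eval_C]
    field_simp

lemma half_le_re (z μ : ℂ) (hz : ‖z‖ = 1) (hμ : ‖μ‖ ≤ 1) (hne : z - μ ≠ 0) :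
    (1 : ℝ) / 2 ≤ (z / (z - μ)).re := by
  have hD : 0 < Complex.normSq (z - μ) := Complex.normSq_pos.mpr hne
  have hz2 : z.re ^ 2 + z.im ^ 2 = 1 := by
    have := congrArg (fun t => t ^ 2) hz
    simp only [Complex.sq_norm, Complex.normSq_apply] at this
    nlinarith [this]
  have hμ2 : μ.re ^ 2 + μ.im ^ 2 ≤ 1 := by
    have h1 : ‖μ‖ ^ 2 ≤ 1 := by nlinarith [norm_nonneg μ]
    rw [Complex.sq_norm, Complex.normSq_apply] at h1
    nlinarith [h1]
  rw [Complex.div_re, ← add_div, le_div_iff₀ hD]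
  simp only [Complex.normSq_apply, Complex.sub_re, Complex.sub_im]
  nlinarith [hz2, hμ2]

theorem stmt_5 (n : ℕ) (hn : 1 ≤ n) (p : Polynomial ℂ) (hdeg : p.natDegree = n)
    (hroots : ∀ μ ∈ p.roots, ‖μ‖ ≤ 1)
    (z : ℂ) (hz : ‖z‖ = 1) (hpz : p.eval z ≠ 0) :
    (n : ℝ) / 2 ≤ (z * (Polynomial.derivative p).eval z / p.eval z).re := by
  have hp0 : p ≠ 0 := fun h => hpz (by simp [h])
  have hcard : Multiset.card p.roots = p.natDegree :=
    (splits_iff_card_roots.mp (IsAlgClosed.splits p))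
  have hfac := Polynomial.C_leadingCoeff_mul_prod_multiset_X_sub_C (p := p) hcard
  set s := p.roots with hs
  have hlc : p.leadingCoeff ≠ 0 := leadingCoeff_ne_zero.mpr hp0
  have hroot_ne : ∀ μ ∈ s, z - μ ≠ 0 := by
    intro μ hμ h0
    have : z = μ := by linear_combination h0
    subst this
    exact hpz ((Polynomial.isRoot_of_mem_roots hμ))
  have key : z * (Polynomial.derivative p).eval z / p.eval z
      = (s.map (fun μ => z / (z - μ))).sum := by
    rw [← aux_logderiv z s hroot_ne]
    conv_lhs => rw [← hfac]
    rw [derivative_C_mul]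
    simp only [eval_mul, eval_C]
    rw [mul_left_comm, mul_div_mul_left _ _ hlc]
  rw [key]
  have hresum : ((s.map (fun μ => z / (z - μ))).sum).re
      = ((s.map (fun μ => (z / (z - μ)).re)).sum) := by
    have := map_multiset_sum Complex.reAddGroupHom (s.map (fun μ => z / (z - μ)))
    simpa [Multiset.map_map, Function.comp] using this
  rw [hresum]
  have hcardn : Multiset.card s = n := by rw [hcard, hdeg]
  calc (n : ℝ) / 2 = (Multiset.map (fun _ : ℂ => (1 : ℝ) / 2) s).sum := by
        rw [Multiset.map_const', Multiset.sum_replicate, hcardn]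
        simp [nsmul_eq_mul]
        ring
    _ ≤ (s.map (fun μ => (z / (z - μ)).re)).sum := by
        apply Multiset.sum_map_le_sum_map
        intro μ hμ
        exact half_le_re z μ hz (hroots μ hμ) (hroot_ne μ hμ)
end

section
/- For complex s with Re(s) > 1, (1 - 2^{-s})·ζ'(s) + 2^{-s}·log(2)·ζ(s) = -∑_{n=1}^∞ log(2n+1)/(2n+1)^s. Consequently |(1 - 2^{-s})·ζ'(s)| ≥ 2^{-Re(s)}·log(2)·|ζ(s)| - ∑_{n=1}^∞ log(2n+1)/(2n+1)^{Re(s)}. -/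
open Complex LSeries

noncomputable def oddInd : ℕ → ℂ := fun n => if Odd n then 1 else 0

lemma oddInd_abscissa : LSeries.abscissaOfAbsConv oddInd ≤ 1 := by
  apply LSeries.abscissaOfAbsConv_le_of_le_const
  exact ⟨1, fun n _ => by unfold oddInd; split <;> simp⟩

set_option maxHeartbeats 1000000 in
lemma oddInd_LSeries_eq {z : ℂ} (hz : 1 < z.re) :
    LSeries oddInd z = (1 - (2 : ℂ) ^ (-z)) * riemannZeta z := by
  have hz0 : z ≠ 0 := fun h => by simp [h] at hz; linarith
  have hg : Summable fun n : ℕ => 1 / (n : ℂ) ^ z :=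
    Complex.summable_one_div_nat_cpow.mpr hz
  have heven : ∀ k : ℕ, (1 : ℂ) / ((2 * k : ℕ) : ℂ) ^ z = (2:ℂ)^(-z) * (1 / (k : ℂ) ^ z) := by
    intro k
    push_cast
    rcases Nat.eq_zero_or_pos k with rfl | hk
    · simp [Complex.zero_cpow hz0]
    · rw [show ((2:ℂ) * k) = ((2:ℝ):ℂ) * ((k:ℝ):ℂ) by push_cast; ring,
        Complex.mul_cpow_ofReal_nonneg (by norm_num) (Nat.cast_nonneg k),
        Complex.cpow_neg]
      push_cast
      rw [one_div, mul_inv, mul_comm]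
      ring
  have hge : Summable fun k : ℕ => 1 / ((2 * k : ℕ) : ℂ) ^ z := by
    simp only [heven]
    exact hg.mul_left _
  have hgo : Summable fun k : ℕ => 1 / ((2 * k + 1 : ℕ) : ℂ) ^ z := by
    have h2 : Function.Injective (fun k : ℕ => 2 * k + 1) := by
      intro a b h
      simp only [Nat.add_right_cancel_iff, Nat.mul_left_cancel_iff] at h
      omega
    exact hg.comp_injective h2
  have hsplit := tsum_even_add_odd (f := fun n : ℕ => 1 / (n : ℂ) ^ z) hge hgo
  have h2z : ∑' k : ℕ, 1 / ((2 * k : ℕ) : ℂ) ^ z = (2:ℂ)^(-z) * riemannZeta z := by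
    simp only [heven]
    rw [tsum_mul_left, ← zeta_eq_tsum_one_div_nat_cpow hz]
  have hodd_eq : ∑' k : ℕ, 1 / ((2 * k + 1 : ℕ) : ℂ) ^ z
      = riemannZeta z - (2:ℂ)^(-z) * riemannZeta z := by
    have h := eq_sub_of_add_eq' hsplit
    rw [h2z] at h
    rw [h, zeta_eq_tsum_one_div_nat_cpow hz]
  have hterm : ∀ k : ℕ, term oddInd z (2 * k + 1) = 1 / ((2 * k + 1 : ℕ) : ℂ) ^ z := by
    intro k
    rw [term_of_ne_zero (by omega)]
    unfold oddInd
    rw [if_pos ⟨k, by ring⟩]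
  have htermE : ∀ k : ℕ, term oddInd z (2 * k) = 0 := by
    intro k
    rcases Nat.eq_zero_or_pos k with rfl | hk
    · simp [term]
    · rw [term_of_ne_zero (by omega)]
      unfold oddInd
      rw [if_neg (by simp [Nat.even_iff, Nat.odd_iff])]
      simp
  have hsumE : Summable fun k : ℕ => term oddInd z (2 * k) := by
    simp only [htermE]; exact summable_zero
  have hsumO : Summable fun k : ℕ => term oddInd z (2 * k + 1) := by
    simp only [hterm]; exact hgo
  have := tsum_even_add_odd (f := term oddInd z) hsumE hsumO
  rw [LSeries, ← this]
  simp only [htermE, hterm, tsum_zero, zero_add]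
  rw [hodd_eq]
  ring

theorem stmt_15 (s : ℂ) (hs : 1 < s.re) :
    (1 - (2 : ℂ) ^ (-s)) * deriv riemannZeta s +
        (2 : ℂ) ^ (-s) * Real.log 2 * riemannZeta s =
      -∑' n : ℕ, (Real.log (2 * (n : ℝ) + 3) : ℂ) / ((2 * (n : ℂ) + 3) ^ s) ∧
    ‖(1 - (2 : ℂ) ^ (-s)) * deriv riemannZeta s‖ ≥
      (2 : ℝ) ^ (-s.re) * Real.log 2 * ‖riemannZeta s‖ -
        ∑' n : ℕ, Real.log (2 * (n : ℝ) + 3) / (2 * (n : ℝ) + 3) ^ s.re := by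
  have hs1 : s ≠ 1 := fun h => by rw [h] at hs; simp at hs
  have habs : LSeries.abscissaOfAbsConv oddInd < (s.re : EReal) :=
    lt_of_le_of_lt oddInd_abscissa (by exact_mod_cast hs)
  have hlog2 : (Real.log 2 : ℂ) = Complex.log 2 := by
    rw [Complex.ofReal_log (by norm_num)]; norm_num
  -- derivative of F
  have hF : HasDerivAt (fun z => (1 - (2:ℂ)^(-z)) * riemannZeta z)
      ((2:ℂ)^(-s) * Complex.log 2 * riemannZeta s
        + (1 - (2:ℂ)^(-s)) * deriv riemannZeta s) s := by
    have h1 : HasDerivAt (fun z : ℂ => (1 : ℂ) - 2 ^ (-z)) ((2:ℂ)^(-s) * Complex.log 2) s := by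
      have h0 := ((hasDerivAt_neg s).const_cpow (c := (2:ℂ)) (Or.inl two_ne_zero)).const_sub 1
      rw [show (2:ℂ)^(-s) * Complex.log 2 = -(2 ^ (-s) * Complex.log 2 * -1) by ring]
      exact h0
    have h2 : HasDerivAt riemannZeta (deriv riemannZeta s) s :=
      (differentiableAt_riemannZeta hs1).hasDerivAt
    exact h1.mul h2
  have heq : deriv (fun z => (1 - (2:ℂ)^(-z)) * riemannZeta z) s = deriv (LSeries oddInd) s := by
    apply Filter.EventuallyEq.deriv_eq
    filter_upwards [(isOpen_lt continuous_const Complex.continuous_re).mem_nhds hs] with z hz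
    exact (oddInd_LSeries_eq hz).symm
  have hderiv : (1 - (2:ℂ)^(-s)) * deriv riemannZeta s
      + (2:ℂ)^(-s) * (Real.log 2 : ℂ) * riemannZeta s
      = - LSeries (LSeries.logMul oddInd) s := by
    have hd := LSeries_deriv habs
    rw [← heq, hF.deriv] at hd
    rw [hlog2, ← hd]
    ring
  -- compute the logMul L-series
  have hlsum : LSeriesSummable (LSeries.logMul oddInd) s :=
    LSeriesSummable_logMul_of_lt_re habs
  have htermE : ∀ k : ℕ, term (LSeries.logMul oddInd) s (2 * k) = 0 := by
    intro k
    rcases Nat.eq_zero_or_pos k with rfl | hk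
    · simp [term]
    · rw [term_of_ne_zero (by omega)]
      unfold LSeries.logMul oddInd
      rw [if_neg (by simp [Nat.even_iff, Nat.odd_iff])]
      simp
  have htermO : ∀ k : ℕ, term (LSeries.logMul oddInd) s (2 * k + 1)
      = (Real.log (2 * (k:ℝ) + 1) : ℂ) / (2 * (k:ℂ) + 1) ^ s := by
    intro k
    rw [term_of_ne_zero (by omega)]
    unfold LSeries.logMul oddInd
    rw [if_pos ⟨k, by ring⟩, mul_one, ← Complex.natCast_log]
    push_cast
    ring_nf
  have hinj : Function.Injective (fun k : ℕ => 2 * k + 1) := by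
    intro a b h
    simp only [Nat.add_right_cancel_iff, Nat.mul_left_cancel_iff] at h
    omega
  have hsumE : Summable fun k : ℕ => term (LSeries.logMul oddInd) s (2 * k) := by
    simp only [htermE]; exact summable_zero
  have hsumO : Summable fun k : ℕ => term (LSeries.logMul oddInd) s (2 * k + 1) :=
    hlsum.comp_injective hinj
  have hgsum : Summable fun k : ℕ => (Real.log (2 * (k:ℝ) + 1) : ℂ) / (2 * (k:ℂ) + 1) ^ s := by
    have := hsumO
    simp only [htermO] at this
    exact this
  have hLeq : LSeries (LSeries.logMul oddInd) s
      = ∑' n : ℕ, (Real.log (2 * (n:ℝ) + 3) : ℂ) / (2 * (n:ℂ) + 3) ^ s := by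
    have hsplit := tsum_even_add_odd (f := term (LSeries.logMul oddInd) s) hsumE hsumO
    rw [LSeries, ← hsplit]
    simp only [htermE, htermO, tsum_zero, zero_add]
    rw [Summable.tsum_eq_zero_add hgsum]
    simp only [Nat.cast_zero, mul_zero, zero_add, Real.log_one, Complex.ofReal_zero, zero_div]
    apply tsum_congr
    intro n
    push_cast
    rw [show 2*((n:ℝ)+1)+1 = 2*(n:ℝ)+3 from by ring, show 2*((n:ℂ)+1)+1 = 2*(n:ℂ)+3 from by ring]
  have hpart1 : (1 - (2:ℂ)^(-s)) * deriv riemannZeta s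
      + (2:ℂ)^(-s) * (Real.log 2 : ℂ) * riemannZeta s
      = -∑' n : ℕ, (Real.log (2 * (n:ℝ) + 3) : ℂ) / (2 * (n:ℂ) + 3) ^ s := by
    rw [hderiv, hLeq]
  refine ⟨hpart1, ?_⟩
  -- part 2
  set T : ℂ := ∑' n : ℕ, (Real.log (2 * (n:ℝ) + 3) : ℂ) / (2 * (n:ℂ) + 3) ^ s with hT
  have hsummC : Summable fun n : ℕ => (Real.log (2 * (n:ℝ) + 3) : ℂ) / (2 * (n:ℂ) + 3) ^ s := by
    have h1 : Summable fun k : ℕ => (Real.log (2 * ((k+1:ℕ):ℝ) + 1) : ℂ) / (2 * ((k+1:ℕ):ℂ) + 1) ^ s :=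
      hgsum.comp_injective Nat.succ_injective
    refine h1.congr fun n => ?_
    push_cast
    ring_nf
  have hnorm_eq : ∀ n : ℕ, ‖(Real.log (2 * (n:ℝ) + 3) : ℂ) / (2 * (n:ℂ) + 3) ^ s‖
      = Real.log (2 * (n:ℝ) + 3) / (2 * (n:ℝ) + 3) ^ s.re := by
    intro n
    have hb : (2 * (n:ℂ) + 3) = ((2 * (n:ℝ) + 3 : ℝ) : ℂ) := by push_cast; ring
    rw [norm_div, hb,
      Complex.norm_cpow_eq_rpow_re_of_pos (by positivity), Complex.norm_real, Real.norm_eq_abs,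
      _root_.abs_of_nonneg (Real.log_nonneg (by have := Nat.cast_nonneg (α := ℝ) n; linarith))]
  have hTle : ‖T‖ ≤ ∑' n : ℕ, Real.log (2 * (n:ℝ) + 3) / (2 * (n:ℝ) + 3) ^ s.re := by
    calc ‖T‖ ≤ ∑' n : ℕ, ‖(Real.log (2 * (n:ℝ) + 3) : ℂ) / (2 * (n:ℂ) + 3) ^ s‖ :=
          norm_tsum_le_tsum_norm (summable_norm_iff.mpr hsummC)
      _ = _ := tsum_congr hnorm_eq
  have hBnorm : ‖(2:ℂ)^(-s) * (Real.log 2 : ℂ) * riemannZeta s‖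
      = (2:ℝ)^(-s.re) * Real.log 2 * ‖riemannZeta s‖ := by
    rw [norm_mul, norm_mul]
    congr 2
    · rw [show ((2:ℂ)) = ((2:ℝ):ℂ) by norm_num,
        Complex.norm_cpow_eq_rpow_re_of_pos (by norm_num)]
      simp
    · rw [Complex.norm_real, Real.norm_eq_abs, _root_.abs_of_nonneg (Real.log_nonneg one_le_two)]
  have hA : (1 - (2:ℂ)^(-s)) * deriv riemannZeta s
      = -(T + (2:ℂ)^(-s) * (Real.log 2 : ℂ) * riemannZeta s) := by
    linear_combination hpart1
  rw [ge_iff_le, hA, norm_neg, ← hBnorm]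
  have h1 : ‖(2:ℂ)^(-s) * (Real.log 2 : ℂ) * riemannZeta s‖ - ‖T‖
      ≤ ‖T + (2:ℂ)^(-s) * (Real.log 2 : ℂ) * riemannZeta s‖ := by
    have h2 := norm_sub_norm_le ((2:ℂ)^(-s) * (Real.log 2 : ℂ) * riemannZeta s) (-T)
    simp only [norm_neg, sub_neg_eq_add] at h2
    simpa [add_comm] using h2
  linarith [h1, hTle]
end

section
/- Let A be an n×n unitary matrix (n ≥ 2) with distinct eigenvalues, p(z) = det(A - zI), and define F(θ) = Re(e^{iθ}·η'(e^{iθ})/η(e^{iθ})) where η(z) = z·(-z)^{-n/2}·det(A)^{-1/2}·p'(z) (with a fixed branch). Then F(θ) = 1 - n/2 + ∑_{j=1}^{n-1} Re(1/(1 - e^{-iθ}·μ'_j)), where μ'_j are the roots of p', and F(θ) ≥ 1/2 for all θ at which F is defined. -/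
open Polynomial Matrix Complex

private lemma aux_deriv_prod (a z : ℂ) (s : Multiset ℂ) (hz : ∀ r ∈ s, z ≠ r) :
    (derivative (C a * (s.map fun r => X - C r).prod)).eval z =
      (C a * (s.map fun r => X - C r).prod).eval z * (s.map fun r => (z - r)⁻¹).sum := by
  induction s using Multiset.induction_on with
  | empty => simp
  | cons r t ih =>
    have hzr : z - r ≠ 0 := sub_ne_zero.mpr (hz r (Multiset.mem_cons_self r t))
    have ih' := ih (fun x hx => hz x (Multiset.mem_cons_of_mem hx))
    simp only [Multiset.map_cons, Multiset.prod_cons, Multiset.sum_cons]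
    have hre : C a * ((X - C r) * (t.map fun x => X - C x).prod)
        = (X - C r) * (C a * (t.map fun x => X - C x).prod) := by ring
    rw [hre, derivative_mul, derivative_sub, derivative_X, derivative_C, sub_zero, one_mul,
      eval_add, eval_mul, eval_mul, eval_sub, eval_X, eval_C, ih']
    simp only [eval_mul, eval_sub, eval_X, eval_C]
    field_simp

private lemma logderiv_eval (q : Polynomial ℂ) (z : ℂ) (hz : q.eval z ≠ 0) :
    (derivative q).eval z = q.eval z * (q.roots.map fun r => (z - r)⁻¹).sum := by
  have hq : q ≠ 0 := fun h => hz (by simp [h])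
  have hcard : q.roots.card = q.natDegree :=
    (Polynomial.splits_iff_card_roots).mp (IsAlgClosed.splits q)
  have hfact := Polynomial.C_leadingCoeff_mul_prod_multiset_X_sub_C hcard
  have hz' : ∀ r ∈ q.roots, z ≠ r := by
    intro r hr hzr
    exact hz (hzr ▸ Polynomial.isRoot_of_mem_roots hr)
  calc (derivative q).eval z
      = (derivative (C q.leadingCoeff * (q.roots.map fun r => X - C r).prod)).eval z := by
        rw [hfact]
    _ = (C q.leadingCoeff * (q.roots.map fun r => X - C r).prod).eval z *
          (q.roots.map fun r => (z - r)⁻¹).sum := aux_deriv_prod _ _ _ hz'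
    _ = q.eval z * (q.roots.map fun r => (z - r)⁻¹).sum := by rw [hfact]

private lemma term_pos {μ r : ℂ} (hμ : 1 < ‖μ‖) (hr : ‖r‖ = 1) :
    0 < (μ * (μ - r)⁻¹).re := by
  have hμr : μ - r ≠ 0 := by
    intro h
    rw [sub_eq_zero] at h
    rw [h, hr] at hμ
    linarith
  have hns : 0 < Complex.normSq (μ - r) := Complex.normSq_pos.mpr hμr
  have hdot : μ.re * r.re + μ.im * r.im ≤ ‖μ‖ := by
    have h1 : (μ * (starRingEnd ℂ) r).re ≤ ‖(μ * (starRingEnd ℂ) r)‖ :=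
      Complex.re_le_norm _
    rw [norm_mul, Complex.norm_conj, hr, mul_one] at h1
    simpa [Complex.mul_re] using h1
  have hnum : 0 < μ.re * (μ - r).re + μ.im * (μ - r).im := by
    have hsq : Complex.normSq μ = ‖μ‖ ^ 2 := (Complex.sq_norm μ).symm
    have : μ.re * (μ - r).re + μ.im * (μ - r).im
        = Complex.normSq μ - (μ.re * r.re + μ.im * r.im) := by
      simp [Complex.normSq_apply, Complex.sub_re, Complex.sub_im]; ring
    rw [this, hsq]
    nlinarith
  rw [← div_eq_mul_inv, Complex.div_re, ← add_div]
  exact div_pos hnum hns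

private lemma half_le_re_inv {u : ℂ} (h1 : ‖u‖ ≤ 1) (h2 : u ≠ 1) :
    (1 : ℝ) / 2 ≤ (1 / (1 - u)).re := by
  have hne : (1 : ℂ) - u ≠ 0 := sub_ne_zero.mpr (Ne.symm h2)
  have hD : 0 < Complex.normSq (1 - u) := Complex.normSq_pos.mpr hne
  have hsq : Complex.normSq u ≤ 1 := by
    have := Complex.sq_norm u
    nlinarith [norm_nonneg u]
  rw [show (1:ℂ)/(1-u) = (1-u)⁻¹ from one_div _, Complex.inv_re]
  rw [le_div_iff₀ hD]
  have hre : (1 - u).re = 1 - u.re := by simp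
  have hexp : Complex.normSq (1 - u) = 1 - 2 * u.re + Complex.normSq u := by
    simp [Complex.normSq_apply, Complex.sub_re, Complex.sub_im]; ring
  nlinarith

private lemma gauss_lucas {p : Polynomial ℂ}
    (hroots : ∀ r ∈ p.roots, ‖r‖ = 1) (hcard : 0 < Multiset.card p.roots)
    {μ : ℂ} (hμ : μ ∈ (derivative p).roots) : ‖μ‖ ≤ 1 := by
  by_contra hgt
  push_neg at hgt
  have hp0 : p ≠ 0 := by
    intro h; rw [h] at hcard; simp at hcard
  have hpμ : p.eval μ ≠ 0 := by
    intro h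
    have : μ ∈ p.roots := by
      rw [Polynomial.mem_roots hp0]; exact h
    have := hroots μ this
    rw [this] at hgt; linarith
  have hder : (derivative p).eval μ = 0 := Polynomial.isRoot_of_mem_roots hμ
  have hsum : (p.roots.map fun r => (μ - r)⁻¹).sum = 0 := by
    have := logderiv_eval p μ hpμ
    rw [hder] at this
    exact (mul_eq_zero.mp this.symm).resolve_left hpμ
  have hsum2 : (p.roots.map fun r => μ * (μ - r)⁻¹).sum = 0 := by
    rw [Multiset.sum_map_mul_left, hsum, mul_zero]
  have hre : ((p.roots.map fun r => (μ * (μ - r)⁻¹).re)).sum = 0 := by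
    have key := AddMonoidHom.map_multiset_sum Complex.reAddGroupHom
      (p.roots.map fun r => μ * (μ - r)⁻¹)
    rw [Multiset.map_map] at key
    simpa [hsum2, Complex.coe_reAddGroupHom, Function.comp] using key.symm
  have hpos : ∀ x ∈ (p.roots.map fun r => (μ * (μ - r)⁻¹).re), 0 < x := by
    intro x hx
    obtain ⟨r, hr, rfl⟩ := Multiset.mem_map.mp hx
    exact term_pos hgt (hroots r hr)
  obtain ⟨x, hx⟩ := Multiset.card_pos_iff_exists_mem.mp (by simpa using hcard :
    0 < Multiset.card (p.roots.map fun r => (μ * (μ - r)⁻¹).re))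
  have hrest : 0 ≤ ((p.roots.map fun r => (μ * (μ - r)⁻¹).re).erase x).sum := by
    have h0 : ∀ y ∈ (p.roots.map fun r => (μ * (μ - r)⁻¹).re).erase x, (0:ℝ) ≤ y :=
      fun y hy => (hpos y (Multiset.mem_of_mem_erase hy)).le
    simpa using Multiset.card_nsmul_le_sum h0
  have := Multiset.cons_erase hx
  rw [← this, Multiset.sum_cons] at hre
  have := hpos x hx
  linarith

theorem stmt_18 (n : ℕ) (hn : 2 ≤ n) (A : Matrix (Fin n) (Fin n) ℂ)
    (hA : A * Aᴴ = 1) (p : Polynomial ℂ)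
    (hp : ∀ z : ℂ, p.eval z = Matrix.det (A - z • (1 : Matrix (Fin n) (Fin n) ℂ)))
    (hdist : p.roots.Nodup)
    (g : ℂ → ℂ) (U : Set ℂ) (hU : IsOpen U)
    (hg : DifferentiableOn ℂ g U)
    (hbranch : ∀ z ∈ U, g z ^ 2 * ((-z) ^ n * Matrix.det A) = 1)
    (η : ℂ → ℂ)
    (hη : ∀ z : ℂ, η z = z * g z * (Polynomial.derivative p).eval z)
    (θ : ℝ) (hmem : Complex.exp (θ * Complex.I) ∈ U)
    (hne : (Polynomial.derivative p).eval (Complex.exp (θ * Complex.I)) ≠ 0) :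
    (Complex.exp (θ * Complex.I) * deriv η (Complex.exp (θ * Complex.I)) /
        η (Complex.exp (θ * Complex.I))).re =
      1 - (n : ℝ) / 2 +
        (((Polynomial.derivative p).roots.map
            (fun μ => (1 / (1 - Complex.exp (-θ * Complex.I) * μ)).re)).sum) ∧
    (1 : ℝ) / 2 ≤
      (Complex.exp (θ * Complex.I) * deriv η (Complex.exp (θ * Complex.I)) /
        η (Complex.exp (θ * Complex.I))).re := by
  set c : ℂ := Matrix.det A with hcdef
  have hc : c ≠ 0 := by
    have h1 : c * Matrix.det Aᴴ = 1 := by rw [hcdef, ← Matrix.det_mul, hA, Matrix.det_one]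
    exact left_ne_zero_of_mul_eq_one h1
  -- polynomial facts
  have hev : ∀ z : ℂ, (Matrix.charpoly A).eval z
      = Matrix.det (z • (1 : Matrix (Fin n) (Fin n) ℂ) - A) := by
    intro z
    rw [Matrix.charpoly, ← Polynomial.coe_evalRingHom, RingHom.map_det]
    congr 1
    ext i j
    by_cases h : i = j <;>
      simp [Matrix.charmatrix_apply, Matrix.map_apply, Matrix.one_apply, h]
  have hpc : p = C ((-1 : ℂ) ^ n) * Matrix.charpoly A := by
    apply Polynomial.funext
    intro z
    rw [hp z, eval_mul, eval_C, hev z]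
    have hm : A - z • (1 : Matrix (Fin n) (Fin n) ℂ)
        = (-1 : ℂ) • (z • (1 : Matrix (Fin n) (Fin n) ℂ) - A) := by
      rw [neg_one_smul, neg_sub]
    rw [hm, Matrix.det_smul, Fintype.card_fin]
  have hdeg : p.natDegree = n := by
    rw [hpc, Polynomial.natDegree_C_mul (by simp : ((-1:ℂ)^n) ≠ 0),
      Matrix.charpoly_natDegree_eq_dim, Fintype.card_fin]
  have hp0 : p ≠ 0 := by
    intro h
    rw [h] at hdeg
    simp at hdeg
    omega
  have hlc : p.coeff n ≠ 0 := by
    rw [← hdeg]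
    exact Polynomial.leadingCoeff_ne_zero.mpr hp0
  have habs : ∀ r ∈ p.roots, ‖r‖ = 1 := by
    intro r hr
    have hroot : p.eval r = 0 := Polynomial.isRoot_of_mem_roots hr
    rw [hp r] at hroot
    obtain ⟨v, hv0, hv⟩ := (Matrix.exists_mulVec_eq_zero_iff).mpr hroot
    have hAv : A *ᵥ v = r • v := by
      have h1 := hv
      rw [Matrix.sub_mulVec, Matrix.smul_mulVec, Matrix.one_mulVec, sub_eq_zero] at h1
      exact h1
    have hAA : Aᴴ * A = 1 := mul_eq_one_comm.mp hA
    have h1 : star (A *ᵥ v) ⬝ᵥ (A *ᵥ v) = star v ⬝ᵥ v := by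
      rw [Matrix.star_mulVec, Matrix.dotProduct_mulVec, Matrix.vecMul_vecMul, hAA,
        Matrix.vecMul_one]
    rw [hAv] at h1
    have h2 : star r * (r * (star v ⬝ᵥ v)) = star v ⬝ᵥ v := by
      have h1' := h1
      rw [star_smul, smul_dotProduct, dotProduct_smul, smul_eq_mul,
        smul_eq_mul] at h1'
      exact h1'
    have hvv : star v ⬝ᵥ v ≠ 0 := by
      open ComplexOrder in
      exact fun h => hv0 (dotProduct_star_self_eq_zero.mp h)
    have h3 : star r * r = 1 := mul_right_cancel₀ hvv (by rw [one_mul, mul_assoc]; exact h2)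
    have h4 : Complex.normSq r = 1 := by
      have h5 := Complex.normSq_eq_conj_mul_self (z := r)
      rw [show ((starRingEnd ℂ) r) = star r from rfl, h3] at h5
      exact_mod_cast h5
    have h6 := Complex.sq_norm r
    rw [h4] at h6
    nlinarith [norm_nonneg r]
  -- analytic identity
  set w : ℂ := Complex.exp (θ * Complex.I) with hw
  have hw0 : w ≠ 0 := Complex.exp_ne_zero _
  have hG0 : g w ≠ 0 := by
    intro h
    have h1 := hbranch w hmem
    rw [h] at h1
    simp at h1
  have hgd : HasDerivAt g (deriv g w) w :=
    (hg.differentiableAt (hU.mem_nhds hmem)).hasDerivAt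
  have hf : HasDerivAt (fun z => g z ^ 2 * ((-z) ^ n * c))
      ((2 * g w ^ 1 * deriv g w) * ((-w) ^ n * c)
        + g w ^ 2 * (((n : ℂ) * (-w) ^ (n - 1) * (-1)) * c)) w :=
    (hgd.pow 2).mul ((((hasDerivAt_id w).neg).pow n).mul_const c)
  have hconst : (fun z => g z ^ 2 * ((-z) ^ n * c)) =ᶠ[nhds w] (fun _ => (1 : ℂ)) :=
    Filter.eventuallyEq_of_mem (hU.mem_nhds hmem) hbranch
  have hzero : HasDerivAt (fun z => g z ^ 2 * ((-z) ^ n * c)) 0 w :=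
    (hasDerivAt_const w (1 : ℂ)).congr_of_eventuallyEq hconst
  have hD0 : (2 * g w ^ 1 * deriv g w) * ((-w) ^ n * c)
      + g w ^ 2 * (((n : ℂ) * (-w) ^ (n - 1) * (-1)) * c) = 0 := hf.unique hzero
  have hpow : (-w) ^ n = (-w) ^ (n - 1) * (-w) := by
    conv_lhs => rw [show n = (n - 1) + 1 by omega]
    rw [pow_succ]
  have hwp : (-w) ^ (n - 1) ≠ 0 := pow_ne_zero _ (neg_ne_zero.mpr hw0)
  have hprod : (2 * deriv g w * w + (n : ℂ) * g w) * (g w * ((-w) ^ (n - 1) * c)) = 0 := by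
    rw [hpow] at hD0
    linear_combination (-1 : ℂ) * hD0
  have hE : 2 * deriv g w * w + (n : ℂ) * g w = 0 := by
    rcases mul_eq_zero.mp hprod with h | h
    · exact h
    · exact absurd h (mul_ne_zero hG0 (mul_ne_zero hwp hc))
  set P : Polynomial ℂ := Polynomial.derivative p with hPdef
  have hP2 : (Polynomial.derivative P).eval w
      = P.eval w * (P.roots.map fun μ => (w - μ)⁻¹).sum := logderiv_eval P w hne
  have hηfun : η = fun z => z * g z * P.eval z := funext hη
  have hηd : HasDerivAt η
      ((1 * g w + w * deriv g w) * P.eval w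
        + (w * g w) * (Polynomial.derivative P).eval w) w := by
    rw [hηfun]
    exact ((hasDerivAt_id w).mul hgd).mul (P.hasDerivAt w)
  have hder : deriv η w = (1 * g w + w * deriv g w) * P.eval w
      + (w * g w) * (Polynomial.derivative P).eval w := hηd.deriv
  have hmain : w * deriv η w / η w
      = 1 - (n : ℂ) / 2 + (P.roots.map fun μ => w * (w - μ)⁻¹).sum := by
    rw [hder, hη w, hP2, Multiset.sum_map_mul_left,
      div_eq_iff (mul_ne_zero (mul_ne_zero hw0 hG0) hne)]
    linear_combination (w * P.eval w / 2) * hE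
  -- counting roots
  have hcards : Multiset.card p.roots = n := by
    rw [← hdeg]
    exact (Polynomial.splits_iff_card_roots).mp (IsAlgClosed.splits p)
  have hPc : P.coeff (n - 1) ≠ 0 := by
    rw [hPdef, Polynomial.coeff_derivative, show n - 1 + 1 = n by omega]
    exact mul_ne_zero hlc (by exact_mod_cast (by positivity : (0:ℝ) < (n - 1 : ℕ) + 1).ne')
  have hP0 : P ≠ 0 := fun h => hPc (by rw [h]; simp)
  have hPdeg : P.natDegree = n - 1 := by
    refine le_antisymm ?_ (Polynomial.le_natDegree_of_ne_zero hPc)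
    have := Polynomial.natDegree_derivative_le p
    rw [hdeg] at this
    exact this
  have hcardP : Multiset.card P.roots = n - 1 := by
    rw [← hPdeg]
    exact (Polynomial.splits_iff_card_roots).mp (IsAlgClosed.splits P)
  have hμne : ∀ μ ∈ P.roots, μ ≠ w :=
    fun μ hμ h => hne (h ▸ Polynomial.isRoot_of_mem_roots hμ)
  have habsμ : ∀ μ ∈ P.roots, ‖μ‖ ≤ 1 :=
    fun μ hμ => gauss_lucas habs (by rw [hcards]; omega) hμ
  have hexp : Complex.exp (-(θ:ℂ) * Complex.I) = w⁻¹ := by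
    rw [show (-(θ:ℂ) * Complex.I) = -((θ:ℂ) * Complex.I) by ring, Complex.exp_neg]
  have habsw : ‖w‖ = 1 := Complex.norm_exp_ofReal_mul_I θ
  have hterm : ∀ μ ∈ P.roots,
      w * (w - μ)⁻¹ = 1 / (1 - Complex.exp (-(θ:ℂ) * Complex.I) * μ) := by
    intro μ hμ
    rw [hexp]
    have hwμ : w - μ ≠ 0 := sub_ne_zero.mpr (Ne.symm (hμne μ hμ))
    have h1 : 1 - w⁻¹ * μ = (w - μ) * w⁻¹ := by field_simp
    rw [h1, one_div, mul_inv, inv_inv, mul_comm]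
  have hmap : (P.roots.map fun μ => w * (w - μ)⁻¹)
      = P.roots.map (fun μ => 1 / (1 - Complex.exp (-(θ:ℂ) * Complex.I) * μ)) :=
    Multiset.map_congr rfl hterm
  rw [hmap] at hmain
  have hre : (w * deriv η w / η w).re = 1 - (n:ℝ)/2
      + (P.roots.map fun μ => (1 / (1 - Complex.exp (-(θ:ℂ) * Complex.I) * μ)).re).sum := by
    rw [hmain, Complex.add_re, Complex.sub_re, Complex.one_re]
    congr 1
    · congr 1
      rw [show ((n:ℂ)/2) = (((n:ℝ)/2 : ℝ) : ℂ) by push_cast; ring, Complex.ofReal_re]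
    · have key := AddMonoidHom.map_multiset_sum Complex.reAddGroupHom
        (P.roots.map fun μ => 1 / (1 - Complex.exp (-(θ:ℂ) * Complex.I) * μ))
      rw [Multiset.map_map] at key
      simpa [Complex.coe_reAddGroupHom, Function.comp] using key
  refine ⟨hre, ?_⟩
  rw [hre]
  have hhalf : ∀ x ∈ (P.roots.map fun μ =>
      (1 / (1 - Complex.exp (-(θ:ℂ) * Complex.I) * μ)).re), (1:ℝ)/2 ≤ x := by
    intro x hx
    obtain ⟨μ, hμ, rfl⟩ := Multiset.mem_map.mp hx
    apply half_le_re_inv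
    · rw [hexp, norm_mul, norm_inv, habsw, inv_one, one_mul]
      exact habsμ μ hμ
    · intro h
      rw [hexp] at h
      apply hμne μ hμ
      field_simp at h
      exact h
  have hsum := Multiset.card_nsmul_le_sum hhalf
  rw [Multiset.card_map, hcardP, nsmul_eq_mul] at hsum
  have hn1 : ((n - 1 : ℕ) : ℝ) = (n : ℝ) - 1 := by
    rw [Nat.cast_sub (by omega : 1 ≤ n)]
    norm_num
  rw [hn1] at hsum
  linarith
end
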